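/- For each m ≥ 1 let c_m : {1,…,m} → {0, 1, 2} be an arbitrary choice function, and define J_m^c(x) = κ · Σ_{j=1}^{m} ∫_{A^m_{3(j−1)+1+c_m(j)}} W(x − y) dy (i.e., for each block of three consecutive subintervals, one of the three is selected as a spiking strip). Then J_m^c converges to J_b(·, η1, η2) uniformly in x ∈ ℝ as m → ∞, uniformly over all such choices: for every ε > 0 there exists M such that for all m ≥ M, all choice functions c_m, and all x ∈ ℝ, |J_m^c(x) − J_b(x, η1, η2)| < ε. -/

import Mathlib

open MeasureTheory

/-- Given a choice function `c` selecting, in each block of three consecutive strips,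
which strip is spiking, the associated mesoscopic profile is
`J_m^c(x) = κ · Σ_{j=1}^{m} ∫_{A^m_{3(j−1)+1+c(j)}} W(x − y) dy`, where
`A^m_i = [η1 + (i−1)(η2−η1)/(3m), η1 + i(η2−η1)/(3m))`. -/
noncomputable def Jmc (W : ℝ → ℝ) (κ η1 η2 : ℝ) (c : ℕ → Fin 3) (m : ℕ) (x : ℝ) : ℝ :=
  κ * ∑ j ∈ Finset.range m,
    ∫ y in (η1 + (3 * (j : ℝ) + ((c j : ℕ) : ℝ)) * (η2 - η1) / (3 * (m : ℝ)))..(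
            η1 + (3 * (j : ℝ) + ((c j : ℕ) : ℝ) + 1) * (η2 - η1) / (3 * (m : ℝ))), W (x - y)

/-- The limiting mesoscopic bump profile `J_b(x, η1, η2) = (κ/3) ∫_{η1}^{η2} W(x−y) dy`. -/
noncomputable def Jb (W : ℝ → ℝ) (κ η1 η2 : ℝ) (x : ℝ) : ℝ :=
  (κ / 3) * ∫ y in η1..η2, W (x - y)

open MeasureTheory

lemma per_uc {f : ℝ → ℝ} {c : ℝ} (hc : 0 < c) (hper : Function.Periodic f c)
    (hf : Continuous f) : UniformContinuous f := by
  rw [Metric.uniformContinuous_iff]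
  intro ε hε
  have hcomp : IsCompact (Set.Icc (-c) (2 * c)) := isCompact_Icc
  have huc := hcomp.uniformContinuousOn_of_continuous hf.continuousOn
  rw [Metric.uniformContinuousOn_iff] at huc
  obtain ⟨d, hd, hduc⟩ := huc ε hε
  refine ⟨min d c, lt_min hd hc, fun {a b} hab => ?_⟩
  set n : ℤ := ⌊a / c⌋ with hn
  have ha' : a - n * c ∈ Set.Ico (0:ℝ) c :=
    ⟨Int.sub_floor_div_mul_nonneg a hc, Int.sub_floor_div_mul_lt a hc⟩
  have hfa : f (a - n * c) = f a := hper.sub_int_mul_eq n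
  have hfb : f (b - n * c) = f b := hper.sub_int_mul_eq n
  rw [← hfa, ← hfb]
  have habd : |a - b| < min d c := by rwa [Real.dist_eq] at hab
  have h1 : a - n * c ∈ Set.Icc (-c) (2 * c) := by
    constructor <;> [linarith [ha'.1]; linarith [ha'.2]]
  have h2 : b - n * c ∈ Set.Icc (-c) (2 * c) := by
    have h3 : |a - b| < c := lt_of_lt_of_le habd (min_le_right _ _)
    rw [abs_lt] at h3
    constructor <;> [linarith [ha'.1, h3.2]; linarith [ha'.2, h3.1]]
  have : dist (a - n * c) (b - n * c) < d := by
    rw [Real.dist_eq]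
    have : a - n * c - (b - n * c) = a - b := by ring
    rw [this]
    exact lt_of_lt_of_le habd (min_le_left _ _)
  exact hduc _ h1 _ h2 this

lemma key_bound {f : ℝ → ℝ} (hf : Continuous f) {k C a b : ℝ} (hab : a ≤ b)
    (h : ∀ y ∈ Set.Ioc a b, |f y - k| ≤ C) :
    |(∫ y in a..b, f y) - (b - a) * k| ≤ C * (b - a) := by
  have hi : IntervalIntegrable f volume a b := hf.intervalIntegrable a b
  have hk : IntervalIntegrable (fun _ : ℝ => k) volume a b :=
    intervalIntegrable_const
  have heq : (∫ y in a..b, f y) - (b - a) * k = ∫ y in a..b, (f y - k) := by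
    rw [intervalIntegral.integral_sub hi hk, intervalIntegral.integral_const, smul_eq_mul]
  rw [heq]
  have := intervalIntegral.norm_integral_le_of_norm_le_const
    (f := fun y => f y - k) (a := a) (b := b) (C := C) ?_
  · rwa [Real.norm_eq_abs, abs_of_nonneg (by linarith : (0:ℝ) ≤ b - a)] at this
  · intro y hy
    rw [Set.uIoc_of_le hab] at hy
    exact h y hy


set_option maxHeartbeats 1000000 in
/-- `J_m^c → J_b(·, η1, η2)` uniformly in `x ∈ ℝ` as `m → ∞`, uniformly over all
choice functions `c`. -/
theorem Jmc_tendstoUniformly_Jb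
    (L : ℝ) (hL : 0 < L) (W : ℝ → ℝ) (hWcont : Continuous W)
    (hWper : Function.Periodic W (2 * L)) (κ : ℝ) (hκ : 0 < κ)
    (η1 η2 : ℝ) (hη : η1 < η2) :
    ∀ ε > 0, ∃ M : ℕ, ∀ m ≥ M, ∀ c : ℕ → Fin 3, ∀ x : ℝ,
      |Jmc W κ η1 η2 c m x - Jb W κ η1 η2 x| < ε := by
  intro ε hε
  set δ := η2 - η1 with hδdef
  clear_value δ
  have hδ : 0 < δ := by simp only [hδdef]; linarith
  have hWuc := per_uc (by linarith : (0:ℝ) < 2 * L) hWper hWcont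
  set ε' := ε / (κ * δ) with hε'def
  clear_value ε'
  have hε' : 0 < ε' := by rw [hε'def]; exact div_pos hε (mul_pos hκ hδ)
  obtain ⟨d, hd, hWd⟩ := Metric.uniformContinuous_iff.mp hWuc ε' hε'
  obtain ⟨N, hN⟩ := exists_nat_gt (δ / d)
  refine ⟨N + 1, fun m hm c x => ?_⟩
  have hm1 : 1 ≤ m := le_trans (by omega) hm
  have hmR : (0:ℝ) < m := by exact_mod_cast Nat.pos_of_ne_zero (by omega)
  have hm0 : (m:ℝ) ≠ 0 := ne_of_gt hmR
  have hmN : δ / d < (m:ℝ) := lt_of_lt_of_le hN (by exact_mod_cast le_trans (Nat.le_succ N) hm)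
  have hdm : δ / m < d := by
    rw [div_lt_iff₀ hmR]
    have := (div_lt_iff₀ hd).mp hmN
    linarith
  set a : ℕ → ℝ := fun j => η1 + j * δ / m with ha
  clear_value a
  have hcont : Continuous fun y => W (x - y) := hWcont.comp (continuous_const.sub continuous_id)
  have hint : ∀ u v : ℝ, IntervalIntegrable (fun y => W (x - y)) volume u v :=
    fun u v => hcont.intervalIntegrable u v
  set ℓ := δ / (3 * (m:ℝ)) with hℓdef
  clear_value ℓ
  have hℓ : 0 < ℓ := by rw [hℓdef]; positivity
  have hgap : ∀ j : ℕ, a (j + 1) - a j = 3 * ℓ := by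
    intro j
    simp only [ha, hℓdef]
    push_cast
    field_simp
    ring
  -- decompose Jb
  have hsum : ∑ j ∈ Finset.range m, ∫ y in a j..a (j+1), W (x - y)
      = ∫ y in η1..η2, W (x - y) := by
    rw [intervalIntegral.sum_integral_adjacent_intervals (fun k _ => hint _ _)]
    have h0 : a 0 = η1 := by simp [ha]
    have h1 : a m = η2 := by
      simp only [ha, hδdef]
      field_simp
      ring
    rw [h0, h1]
  have hJmc : Jmc W κ η1 η2 c m x = ∑ j ∈ Finset.range m,
      κ * ∫ y in (η1 + (3 * (j:ℝ) + ((c j : ℕ):ℝ)) * δ / (3 * (m:ℝ)))..(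
        η1 + (3 * (j:ℝ) + ((c j : ℕ):ℝ) + 1) * δ / (3 * (m:ℝ))), W (x - y) := by
    simp only [Jmc, Finset.mul_sum, hδdef]
  have hJb : Jb W κ η1 η2 x = ∑ j ∈ Finset.range m,
      κ / 3 * ∫ y in a j..a (j+1), W (x - y) := by
    rw [Jb, ← hsum, Finset.mul_sum]
  rw [hJmc, hJb, ← Finset.sum_sub_distrib]
  have key : ∀ j ∈ Finset.range m,
      |κ * (∫ y in (η1 + (3 * (j:ℝ) + ((c j : ℕ):ℝ)) * δ / (3 * (m:ℝ)))..(
        η1 + (3 * (j:ℝ) + ((c j : ℕ):ℝ) + 1) * δ / (3 * (m:ℝ))), W (x - y))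
        - κ / 3 * ∫ y in a j..a (j+1), W (x - y)| ≤ 2 * κ * ε' * ℓ := by
    intro j hj
    set c' : ℝ := ((c j : ℕ) : ℝ) with hc'
    have hc'0 : 0 ≤ c' := by positivity
    have hc'2 : c' ≤ 2 := by
      have h2 : (c j : ℕ) ≤ 2 := Nat.lt_succ_iff.mp (c j).is_lt
      rw [hc']
      exact_mod_cast h2
    set p := η1 + (3 * (j:ℝ) + c') * δ / (3 * (m:ℝ)) with hp
    set q := η1 + (3 * (j:ℝ) + c' + 1) * δ / (3 * (m:ℝ)) with hq
    have hqp : q - p = ℓ := by simp only [hp, hq, hℓdef]; ring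
    have hap : a j ≤ p := by
      have : p - a j = c' * ℓ := by
        simp only [hp, ha, hℓdef]; field_simp; ring
      nlinarith
    have hqa : q ≤ a (j + 1) := by
      have h1 : q - a j = (c' + 1) * ℓ := by
        simp only [hq, ha, hℓdef]; field_simp; ring
      have h2 := hgap j
      nlinarith
    set k := W (x - a j) with hk
    have hnear : ∀ y : ℝ, a j ≤ y → y ≤ a (j + 1) → |W (x - y) - k| ≤ ε' := by
      intro y h1 h2
      have hdist : dist (x - y) (x - a j) < d := by
        rw [Real.dist_eq]
        have he : x - y - (x - a j) = -(y - a j) := by ring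
        rw [he, abs_neg, abs_of_nonneg (by linarith)]
        have h3 := hgap j
        have : 3 * ℓ = δ / m := by rw [hℓdef]; field_simp
        linarith
      have := hWd hdist
      rw [Real.dist_eq] at this
      linarith
    have b1 : |(∫ y in p..q, W (x - y)) - (q - p) * k| ≤ ε' * (q - p) :=
      key_bound hcont (by linarith) (fun y hy => hnear y (by linarith [hy.1]) (by linarith [hy.2]))
    have b2 : |(∫ y in a j..a (j+1), W (x - y)) - (a (j+1) - a j) * k| ≤ ε' * (a (j+1) - a j) := by
      have hle : a j ≤ a (j + 1) := by linarith [hgap j]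
      exact key_bound hcont hle (fun y hy => hnear y (le_of_lt hy.1) hy.2)
    rw [hqp] at b1
    rw [hgap j] at b2
    set S := ∫ y in p..q, W (x - y) with hS
    set B := ∫ y in a j..a (j+1), W (x - y) with hB
    have hsplit : κ * S - κ / 3 * B = κ * (S - ℓ * k) - κ / 3 * (B - 3 * ℓ * k) := by ring
    rw [hsplit]
    calc |κ * (S - ℓ * k) - κ / 3 * (B - 3 * ℓ * k)|
        ≤ |κ * (S - ℓ * k)| + |κ / 3 * (B - 3 * ℓ * k)| := abs_sub _ _
      _ = κ * |S - ℓ * k| + κ / 3 * |B - 3 * ℓ * k| := by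
          rw [abs_mul, abs_mul, abs_of_pos hκ, abs_of_pos (by linarith : (0:ℝ) < κ / 3)]
      _ ≤ κ * (ε' * ℓ) + κ / 3 * (ε' * (3 * ℓ)) := by
          exact add_le_add (mul_le_mul_of_nonneg_left b1 hκ.le)
            (mul_le_mul_of_nonneg_left b2 (by linarith))
      _ = 2 * κ * ε' * ℓ := by ring
  have hfin : |∑ j ∈ Finset.range m,
      (κ * (∫ y in (η1 + (3 * (j:ℝ) + ((c j : ℕ):ℝ)) * δ / (3 * (m:ℝ)))..(
        η1 + (3 * (j:ℝ) + ((c j : ℕ):ℝ) + 1) * δ / (3 * (m:ℝ))), W (x - y))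
        - κ / 3 * ∫ y in a j..a (j+1), W (x - y))|
      ≤ ∑ j ∈ Finset.range m, (2 * κ * ε' * ℓ) :=
    le_trans (Finset.abs_sum_le_sum_abs _ _) (Finset.sum_le_sum key)
  refine lt_of_le_of_lt hfin ?_
  rw [Finset.sum_const, Finset.card_range, nsmul_eq_mul]
  have heq : (m:ℝ) * (2 * κ * ε' * ℓ) = 2 / 3 * ε := by
    have hκ0 : κ ≠ 0 := ne_of_gt hκ
    have hδ0 : δ ≠ 0 := ne_of_gt hδ
    rw [hε'def, hℓdef]
    have h2 : (m:ℝ) * (2 * κ * (ε / (κ * δ)) * (δ / (3 * m))) =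
        2 / 3 * ε * (κ / κ) * (δ / δ) * ((m:ℝ) / m) := by ring
    rw [h2, div_self hκ0, div_self hδ0, div_self hm0]
    ring
  rw [heq]
  linarith
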